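/- Under the stated assumptions on X, h and g, for every real σ ≥ 0 such that u_NO(σ) > min_{x∈X} g(x), one has σ_NC(u_NO(σ)) = σ. -/

import Mathlib

/-- `σ_NC(u)`: the infimum of `h` over feasible points `x ∈ X` with `g x < u`,
taken in `EReal` so that the infimum of the empty set is `+∞`. -/
noncomputable def sigmaNC {d : ℕ} (X : Set (Fin d → ℝ)) (h g : (Fin d → ℝ) → ℝ) (u : ℝ) :
    EReal :=
  sInf ((fun x => ((h x : ℝ) : EReal)) '' {x ∈ X | g x < u})

/-- `u_NO(σ)`: the minimum of `g` over feasible points `x ∈ X` with `h x ≤ σ`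
(the minimum is attained, so it equals the infimum). -/
noncomputable def uNO {d : ℕ} (X : Set (Fin d → ℝ)) (h g : (Fin d → ℝ) → ℝ) (σ : ℝ) : ℝ :=
  sInf (g '' {x ∈ X | h x ≤ σ})

theorem stmt0 {d : ℕ} (X : Set (Fin d → ℝ)) (hXne : X.Nonempty) (hXc : IsCompact X)
    (h g : (Fin d → ℝ) → ℝ) (hh : ContinuousOn h X) (hg : ContinuousOn g X)
    -- (a) there exists `x̲ ∈ X` with `h x̲ ≤ 0`
    (ha : ∃ x ∈ X, h x ≤ 0)
    -- (b) `min_{x∈X} g x < 0`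
    (hb : sInf (g '' X) < 0)
    -- (c) every local minimum of `g` on `X` is a global minimum of `g` on `X`
    (hcg : ∀ x ∈ X, (∃ U ∈ nhds x, ∀ y ∈ U ∩ X, g x ≤ g y) → ∀ y ∈ X, g x ≤ g y)
    -- (c) every local minimum of `h` on `X` is a global minimum of `h` on `X`
    (hch : ∀ x ∈ X, (∃ U ∈ nhds x, ∀ y ∈ U ∩ X, h x ≤ h y) → ∀ y ∈ X, h x ≤ h y) :
    ∀ σ : ℝ, 0 ≤ σ → sInf (g '' X) < uNO X h g σ →
      sigmaNC X h g (uNO X h g σ) = (σ : EReal) := by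
  intro σ hσ hu
  set u : ℝ := uNO X h g σ with hu_def
  set F : Set (Fin d → ℝ) := {x ∈ X | h x ≤ σ} with hF
  have hFsub : F ⊆ X := fun x hx => hx.1
  have hFne : F.Nonempty := by
    obtain ⟨x, hxX, hx0⟩ := ha
    exact ⟨x, hxX, hx0.trans hσ⟩
  have hFclosed : IsClosed F := by
    have h1 : IsClosed (X ∩ h ⁻¹' Set.Iic σ) :=
      ContinuousOn.preimage_isClosed_of_isClosed hh hXc.isClosed isClosed_Iic
    convert h1 using 1
    rfl
  have hFc : IsCompact F := hXc.of_isClosed_subset hFclosed hFsub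
  obtain ⟨x₀, hx₀F, hx₀min⟩ := hFc.exists_isMinOn hFne (hg.mono hFsub)
  have hleast : IsLeast (g '' F) (g x₀) :=
    ⟨⟨x₀, hx₀F, rfl⟩, by rintro _ ⟨y, hy, rfl⟩; exact hx₀min hy⟩
  have hgx₀ : g x₀ = u := (hleast.csInf_eq).symm
  -- any strictly-better point must violate the h-constraint
  have key : ∀ x ∈ X, g x < u → σ < h x := by
    intro x hxX hgx
    by_contra hcon
    push_neg at hcon
    have hxF : x ∈ F := ⟨hxX, hcon⟩
    have : u ≤ g x := hgx₀ ▸ hx₀min hxF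
    linarith
  have hle : sigmaNC X h g u ≤ (σ : EReal) := by
    by_contra hcon
    push_neg at hcon
    obtain ⟨c, hc1, hc2⟩ := EReal.lt_iff_exists_real_btwn.mp hcon
    have hσc : σ < c := by exact_mod_cast hc1
    have key2 : ∀ x ∈ X, g x < u → c < h x := by
      intro x hxX hgx
      have hmem : ((h x : ℝ) : EReal) ∈
          (fun x => ((h x : ℝ) : EReal)) '' {x ∈ X | g x < u} :=
        ⟨x, ⟨hxX, hgx⟩, rfl⟩
      have : sigmaNC X h g u ≤ ((h x : ℝ) : EReal) := sInf_le hmem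
      exact_mod_cast hc2.trans_le this
    have hx₀c : h x₀ < c := lt_of_le_of_lt hx₀F.2 hσc
    have hnhd : h ⁻¹' Set.Iio c ∈ nhdsWithin x₀ X := hh x₀ hx₀F.1 (Iio_mem_nhds hx₀c)
    rw [mem_nhdsWithin] at hnhd
    obtain ⟨U, hUo, hxU, hUsub⟩ := hnhd
    have hloc : ∃ V ∈ nhds x₀, ∀ y ∈ V ∩ X, g x₀ ≤ g y := by
      refine ⟨U, hUo.mem_nhds hxU, fun y hy => ?_⟩
      by_contra hcon2
      push_neg at hcon2
      have hyc : h y < c := hUsub hy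
      have : c < h y := key2 y hy.2 (by rw [← hgx₀]; exact hcon2)
      linarith
    have hglob := hcg x₀ hx₀F.1 hloc
    have : u ≤ sInf (g '' X) := by
      apply le_csInf (hXne.image g)
      rintro _ ⟨y, hy, rfl⟩
      rw [← hgx₀]
      exact hglob y hy
    linarith
  have hge : (σ : EReal) ≤ sigmaNC X h g u := by
    apply le_sInf
    rintro _ ⟨x, ⟨hxX, hgx⟩, rfl⟩
    simpa using EReal.coe_le_coe_iff.mpr (key x hxX hgx).le
  exact le_antisymm hle hge
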